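/- Let G = (V, E, r, s) be a finite directed graph with no sinks (s is surjective onto V... i.e., every vertex emits an edge), let each vertex v carry a compact metric space T_v, and let each edge e carry a map φ_e : T_{r(e)} → T_{s(e)} that is c-Lipschitz for a uniform constant 0 < c < 1. Then for every infinite path α = (α_1, α_2, …) in G (meaning r(α_i) = s(α_{i+1}) for all i), the intersection ⋂_{k∈ℕ} φ_{α_1} ∘ ⋯ ∘ φ_{α_k} (T_{r(α_k)}) is a singleton subset of T_{s(α_1)}. -/

import Mathlib

/-- The composition `φ_{α 0} ∘ ⋯ ∘ φ_{α k} : T (r (α k)) → T (s (α 0))` along a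
path `α` in a graph, where each edge `e` carries a map `φ e : T (r e) → T (s e)`. -/
def pathMap {V E : Type*} (T : V → Type*) (r s : E → V)
    (φ : (e : E) → T (r e) → T (s e)) (α : ℕ → E)
    (h : ∀ i, r (α i) = s (α (i + 1))) : (k : ℕ) → T (r (α k)) → T (s (α 0))
  | 0 => φ (α 0)
  | (k + 1) => fun x =>
      pathMap T r s φ α h k (cast (congrArg T (h k)).symm (φ (α (k + 1)) x))

lemma continuous_cast_T {V : Type*} (T : V → Type*) [∀ v, TopologicalSpace (T v)]
    {v w : V} (e : v = w) : Continuous (cast (congrArg T e)) := by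
  subst e; exact continuous_id

lemma dist_cast_T {V : Type*} (T : V → Type*) [∀ v, MetricSpace (T v)]
    {v w : V} (e : v = w) (x y : T v) :
    dist (cast (congrArg T e) x) (cast (congrArg T e) y) = dist x y := by
  subst e; rfl

lemma pathMap_dist {V E : Type*} (T : V → Type*) [∀ v, MetricSpace (T v)]
    (r s : E → V) (φ : (e : E) → T (r e) → T (s e)) {c : ℝ} (hc0 : 0 ≤ c)
    (hφ : ∀ (e : E) (x y : T (r e)), dist (φ e x) (φ e y) ≤ c * dist x y)
    (α : ℕ → E) (hα : ∀ i, r (α i) = s (α (i + 1))) :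
    ∀ (k : ℕ) (x y : T (r (α k))),
      dist (pathMap T r s φ α hα k x) (pathMap T r s φ α hα k y)
        ≤ c ^ (k + 1) * dist x y := by
  intro k
  induction k with
  | zero => intro x y; simpa [pathMap] using hφ (α 0) x y
  | succ k ih =>
    intro x y
    set u := cast (congrArg T (hα k)).symm (φ (α (k + 1)) x) with hu
    set v := cast (congrArg T (hα k)).symm (φ (α (k + 1)) y) with hv
    show dist (pathMap T r s φ α hα k u) (pathMap T r s φ α hα k v) ≤ c ^ (k + 2) * dist x y
    have hd : dist u v = dist (φ (α (k + 1)) x) (φ (α (k + 1)) y) :=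
      dist_cast_T T (hα k).symm _ _
    calc dist (pathMap T r s φ α hα k u) (pathMap T r s φ α hα k v)
        ≤ c ^ (k + 1) * dist u v := ih u v
      _ = c ^ (k + 1) * dist (φ (α (k + 1)) x) (φ (α (k + 1)) y) := by rw [hd]
      _ ≤ c ^ (k + 1) * (c * dist x y) :=
          mul_le_mul_of_nonneg_left (hφ _ _ _) (pow_nonneg hc0 _)
      _ = c ^ (k + 2) * dist x y := by ring

lemma pathMap_continuous {V E : Type*} (T : V → Type*) [∀ v, MetricSpace (T v)]
    (r s : E → V) (φ : (e : E) → T (r e) → T (s e)) {c : ℝ} (hc0 : 0 ≤ c)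
    (hφ : ∀ (e : E) (x y : T (r e)), dist (φ e x) (φ e y) ≤ c * dist x y)
    (α : ℕ → E) (hα : ∀ i, r (α i) = s (α (i + 1))) (k : ℕ) :
    Continuous (pathMap T r s φ α hα k) := by
  have hφc : ∀ e : E, Continuous (φ e) := fun e =>
    (LipschitzWith.of_dist_le_mul (K := ⟨c, hc0⟩) (fun x y => hφ e x y)).continuous
  induction k with
  | zero => exact hφc (α 0)
  | succ k ih =>
    show Continuous fun x =>
      pathMap T r s φ α hα k (cast (congrArg T (hα k)).symm (φ (α (k + 1)) x))
    exact ih.comp ((continuous_cast_T T (hα k).symm).comp (hφc (α (k + 1))))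

/-- In a Mauldin–Williams graph (finite directed graph with no sinks, compact metric
spaces `T v`, uniformly `c`-Lipschitz maps `φ e : T (r e) → T (s e)` with `0 < c < 1`),
for every infinite path `α` the intersection
`⋂ k, φ_{α 0} ∘ ⋯ ∘ φ_{α k} '' (T (r (α k)))` is a singleton subset of `T (s (α 0))`. -/
theorem stmt_2 {V E : Type*} [Fintype V] [Fintype E] (r s : E → V)
    (hnosink : ∀ v : V, ∃ e : E, s e = v)
    (T : V → Type*) [∀ v, MetricSpace (T v)] [∀ v, CompactSpace (T v)]
    [∀ v, Nonempty (T v)]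
    (φ : (e : E) → T (r e) → T (s e)) (c : ℝ) (hc0 : 0 < c) (hc1 : c < 1)
    (hφ : ∀ (e : E) (x y : T (r e)), dist (φ e x) (φ e y) ≤ c * dist x y)
    (α : ℕ → E) (hα : ∀ i, r (α i) = s (α (i + 1))) :
    ∃ x : T (s (α 0)),
      (⋂ k, pathMap T r s φ α hα k '' (Set.univ : Set (T (r (α k))))) = {x} := by
  classical
  set A : ℕ → Set (T (s (α 0))) := fun k => pathMap T r s φ α hα k '' Set.univ with hA
  have hne : ∀ k, (A k).Nonempty := fun k => (Set.univ_nonempty).image _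
  have hcpt : ∀ k, IsCompact (A k) := fun k =>
    isCompact_univ.image (pathMap_continuous T r s φ hc0.le hφ α hα k)
  have hanti : ∀ k, A (k + 1) ⊆ A k := by
    intro k y hy
    obtain ⟨x, -, rfl⟩ := hy
    exact ⟨cast (congrArg T (hα k)).symm (φ (α (k + 1)) x), trivial, rfl⟩
  have hinter : (⋂ k, A k).Nonempty :=
    IsCompact.nonempty_iInter_of_sequence_nonempty_isCompact_isClosed A hanti hne
      (hcpt 0) (fun k => (hcpt k).isClosed)
  obtain ⟨x, hx⟩ := hinter
  refine ⟨x, Set.eq_singleton_iff_nonempty_unique_mem.mpr ⟨⟨x, hx⟩, ?_⟩⟩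
  intro y hy
  -- uniform diameter bound
  set D : ℝ := ∑ v : V, Metric.diam (Set.univ : Set (T v)) with hD
  have hDv : ∀ v : V, Metric.diam (Set.univ : Set (T v)) ≤ D := fun v =>
    Finset.single_le_sum (f := fun v => Metric.diam (Set.univ : Set (T v)))
      (fun _ _ => Metric.diam_nonneg) (Finset.mem_univ v)
  have hdist : ∀ k, dist y x ≤ c ^ (k + 1) * D := by
    intro k
    obtain ⟨a, -, ha⟩ := Set.mem_iInter.mp hy k
    obtain ⟨b, -, hb⟩ := Set.mem_iInter.mp hx k
    calc dist y x = dist (pathMap T r s φ α hα k a) (pathMap T r s φ α hα k b) := by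
          rw [ha, hb]
      _ ≤ c ^ (k + 1) * dist a b := pathMap_dist T r s φ hc0.le hφ α hα k a b
      _ ≤ c ^ (k + 1) * D := by
          refine mul_le_mul_of_nonneg_left ?_ (pow_nonneg hc0.le _)
          exact le_trans (Metric.dist_le_diam_of_mem isCompact_univ.isBounded
            trivial trivial) (hDv _)
  have htend : Filter.Tendsto (fun k : ℕ => c ^ (k + 1) * D) Filter.atTop (nhds 0) := by
    have h1 : Filter.Tendsto (fun k : ℕ => c ^ (k + 1)) Filter.atTop (nhds 0) :=
      (tendsto_pow_atTop_nhds_zero_of_lt_one hc0.le hc1).comp (Filter.tendsto_add_atTop_nat 1)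
    simpa using h1.mul_const D
  have : dist y x ≤ 0 := ge_of_tendsto' htend hdist
  exact dist_le_zero.mp this
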